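/- arXiv:2511.22526 — 2 statements merged into one kernel-verified Lean document; each statement's English description precedes it below -/
import Mathlib

section
/- Let S be a set of 4 points in the plane in general position, and let s and t be two consecutive vertices of the boundary of the convex hull of S. Then S contains two edge-disjoint plane Hamiltonian paths, one starting at s and the other starting at t. -/
open Set
open scoped Classical

noncomputable section

/-- Points in the plane. -/
abbrev Pt : Type := ℝ × ℝ

/-- Orientation determinant of the triple `(a, b, p)`:
positive iff `p` lies strictly to the left of the directed line from `a` to `b`. -/
def det3 (a b p : Pt) : ℝ :=
  (b.1 - a.1) * (p.2 - a.2) - (b.2 - a.2) * (p.1 - a.1)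

/-- A finite point set is in general position if no three of its points are collinear. -/
def GenPos (S : Finset Pt) : Prop :=
  ∀ p ∈ S, ∀ q ∈ S, ∀ r ∈ S,
    p ≠ q → p ≠ r → q ≠ r → ¬ Collinear ℝ ({p, q, r} : Set Pt)

/-- The list of (directed) edges of a polygonal path given by its list of vertices. -/
def edgeList (l : List Pt) : List (Pt × Pt) := l.zip l.tail

/-- The segment `ab` is an edge of the path `l`, i.e. `a` and `b` are consecutive on `l`. -/
def IsEdgeOf (a b : Pt) (l : List Pt) : Prop :=
  (a, b) ∈ edgeList l ∨ (b, a) ∈ edgeList l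

/-- `l` is a plane (crossing-free) Hamiltonian path on the point set `S`:
its vertices are exactly the points of `S`, each visited once, and any two distinct
edges intersect only in common endpoints. -/
def PlanePath (S : Finset Pt) (l : List Pt) : Prop :=
  l.Nodup ∧ l.toFinset = S ∧
  ∀ e ∈ edgeList l, ∀ f ∈ edgeList l, e ≠ f →
    segment ℝ e.1 e.2 ∩ segment ℝ f.1 f.2 ⊆
      (({e.1, e.2} : Set Pt) ∩ ({f.1, f.2} : Set Pt))

/-- Two paths are edge-disjoint: no segment is an edge of both. -/
def EdgeDisjoint (l₁ l₂ : List Pt) : Prop :=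
  ∀ x y : Pt, IsEdgeOf x y l₁ → ¬ IsEdgeOf x y l₂

/-- `p` is a vertex of the boundary of the convex hull of `S`. -/
def HullVertex (S : Finset Pt) (p : Pt) : Prop :=
  p ∈ Set.extremePoints ℝ (convexHull ℝ (S : Set Pt))

/-- `ab` is an edge of the boundary of the convex hull of `S`, i.e. `a` and `b` are
consecutive hull vertices: all other points of `S` lie strictly on one side of line `ab`. -/
def IsHullEdge (S : Finset Pt) (a b : Pt) : Prop :=
  a ∈ S ∧ b ∈ S ∧ a ≠ b ∧
  ((∀ p ∈ S, p ≠ a → p ≠ b → 0 < det3 a b p) ∨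
   (∀ p ∈ S, p ≠ a → p ≠ b → det3 a b p < 0))

/-- The segment `xy` is a bridge over the line through `a` and `b`:
it crosses the line `ℓ(ab)` but not the segment `ab`. -/
def IsBridge (a b x y : Pt) : Prop :=
  det3 a b x * det3 a b y < 0 ∧ segment ℝ x y ∩ segment ℝ a b = ∅

/-- The set of common edges of the two paths is exactly the segment `ab`. -/
def SharesExactly (a b : Pt) (l₁ l₂ : List Pt) : Prop :=
  IsEdgeOf a b l₁ ∧ IsEdgeOf a b l₂ ∧
  ∀ x y : Pt, IsEdgeOf x y l₁ → IsEdgeOf x y l₂ → ({x, y} : Set Pt) = ({a, b} : Set Pt)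


/-! ### Auxiliary lemmas -/

lemma seg_mem {x y z : Pt} (h : z ∈ segment ℝ x y) :
    ∃ a : ℝ, 0 ≤ a ∧ a ≤ 1 ∧ z.1 = a*x.1+(1-a)*y.1 ∧ z.2 = a*x.2+(1-a)*y.2 := by
  obtain ⟨a, b, ha, hb, hab, hz⟩ := h
  have h1 : (a • x + b • y).1 = z.1 := by rw [hz]
  have h2 : (a • x + b • y).2 = z.2 := by rw [hz]
  simp only [Prod.fst_add, Prod.snd_add, Prod.smul_fst, Prod.smul_snd, smul_eq_mul] at h1 h2
  have hb1 : b = 1 - a := by linarith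
  subst hb1
  exact ⟨a, ha, by linarith, h1.symm, h2.symm⟩

lemma det3_on_seg {x y z : Pt} (h : z ∈ segment ℝ x y) : det3 x y z = 0 := by
  obtain ⟨a, _, _, h3, h4⟩ := seg_mem h
  simp only [det3]
  rw [h3, h4]; ring

lemma det3_seg_affine (p q : Pt) {x y z : Pt} (h : z ∈ segment ℝ x y) :
    ∃ a : ℝ, 0 ≤ a ∧ a ≤ 1 ∧ det3 p q z = a * det3 p q x + (1-a) * det3 p q y := by
  obtain ⟨a, ha0, ha1, h3, h4⟩ := seg_mem h
  refine ⟨a, ha0, ha1, ?_⟩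
  simp only [det3]; rw [h3, h4]; ring

lemma seg_disjoint {a b c d : Pt} (h : det3 a b c * det3 a b d > 0) :
    ∀ z, z ∈ segment ℝ a b → z ∈ segment ℝ c d → False := by
  intro z h1 h2
  have h0 : det3 a b z = 0 := det3_on_seg h1
  obtain ⟨u, hu0, hu1, he⟩ := det3_seg_affine a b h2
  rcases eq_or_lt_of_le hu0 with h' | h'
  · rcases mul_pos_iff.mp h with ⟨hc, hd⟩ | ⟨hc, hd⟩ <;>
    · rw [← h', h0] at he; simp at he; linarith
  · rcases mul_pos_iff.mp h with ⟨hc, hd⟩ | ⟨hc, hd⟩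
    · nlinarith [mul_pos h' hc, mul_nonneg (by linarith : (0:ℝ) ≤ 1 - u) hd.le]
    · nlinarith [mul_neg_of_pos_of_neg h' hc,
        mul_nonpos_of_nonneg_of_nonpos (by linarith : (0:ℝ) ≤ 1 - u) hd.le]

lemma seg_adj {a b c : Pt} (h : det3 a b c ≠ 0) :
    ∀ z, z ∈ segment ℝ a b → z ∈ segment ℝ b c → z = b := by
  intro z h1 h2
  obtain ⟨α, hα0, hα1, e1, e2⟩ := seg_mem h1
  obtain ⟨γ, hγ0, hγ1, f1, f2⟩ := seg_mem h2
  have E1 : α * a.1 + (1 - α) * b.1 = γ * b.1 + (1 - γ) * c.1 := e1.symm.trans f1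
  have E2 : α * a.2 + (1 - α) * b.2 = γ * b.2 + (1 - γ) * c.2 := e2.symm.trans f2
  have hK : α * det3 a b c = 0 := by
    simp only [det3]
    linear_combination (c.1 - b.1) * E2 - (c.2 - b.2) * E1
  have hα : α = 0 := by
    rcases mul_eq_zero.mp hK with h' | h'
    · exact h'
    · exact absurd h' h
  apply Prod.ext
  · rw [e1, hα]; ring
  · rw [e2, hα]; ring

lemma collinear_of_det3 {p q r : Pt} (hpq : p ≠ q) (h : det3 p q r = 0) :
    Collinear ℝ ({p, q, r} : Set Pt) := by
  rw [collinear_iff_of_mem (Set.mem_insert p _)]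
  refine ⟨q - p, ?_⟩
  intro x hx
  simp only [Set.mem_insert_iff, Set.mem_singleton_iff] at hx
  rcases hx with rfl | rfl | rfl
  · exact ⟨0, by simp⟩
  · exact ⟨1, by simp⟩
  · simp only [det3] at h
    by_cases h1 : q.1 - p.1 ≠ 0
    · refine ⟨(x.1 - p.1)/(q.1 - p.1), Prod.ext ?_ ?_⟩
      · show x.1 = (x.1 - p.1)/(q.1 - p.1) * (q.1 - p.1) + p.1
        field_simp
        ring
      · show x.2 = (x.1 - p.1)/(q.1 - p.1) * (q.2 - p.2) + p.2
        field_simp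
        linear_combination h
    · push_neg at h1
      have h2 : q.2 - p.2 ≠ 0 := by
        intro h2
        exact hpq (Prod.ext (by linarith) (by linarith))
      have h3 : (q.2 - p.2) * (x.1 - p.1) = 0 := by linear_combination (x.2 - p.2) * h1 - h
      have hx1 : x.1 = p.1 := by
        rcases mul_eq_zero.mp h3 with h' | h'
        · exact absurd h' h2
        · linarith
      refine ⟨(x.2 - p.2)/(q.2 - p.2), Prod.ext ?_ ?_⟩
      · show x.1 = (x.2 - p.2)/(q.2 - p.2) * (q.1 - p.1) + p.1
        rw [h1, mul_zero, zero_add]; exact hx1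
      · show x.2 = (x.2 - p.2)/(q.2 - p.2) * (q.2 - p.2) + p.2
        field_simp
        ring

lemma cross3 {a b c d : Pt} (h1 : det3 a b c ≠ 0) (h2 : det3 b c d ≠ 0)
    (h3 : ∀ z, z ∈ segment ℝ a b → z ∈ segment ℝ c d → False) :
    ∀ e ∈ edgeList [a,b,c,d], ∀ f ∈ edgeList [a,b,c,d], e ≠ f →
      segment ℝ e.1 e.2 ∩ segment ℝ f.1 f.2 ⊆
        (({e.1, e.2} : Set Pt) ∩ ({f.1, f.2} : Set Pt)) := by
  have hE : edgeList [a,b,c,d] = [(a,b),(b,c),(c,d)] := rfl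
  rw [hE]
  intro e he f hf hef
  simp only [List.mem_cons, List.not_mem_nil, or_false] at he hf
  rcases he with rfl|rfl|rfl <;> rcases hf with rfl|rfl|rfl
  · exact absurd rfl hef
  · rintro z ⟨hz1, hz2⟩
    obtain rfl := seg_adj h1 z hz1 hz2
    simp
  · rintro z ⟨hz1, hz2⟩
    exact (h3 z hz1 hz2).elim
  · rintro z ⟨hz1, hz2⟩
    obtain rfl := seg_adj h1 z hz2 hz1
    simp
  · exact absurd rfl hef
  · rintro z ⟨hz1, hz2⟩
    obtain rfl := seg_adj h2 z hz1 hz2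
    simp
  · rintro z ⟨hz1, hz2⟩
    exact (h3 z hz2 hz1).elim
  · rintro z ⟨hz1, hz2⟩
    obtain rfl := seg_adj h2 z hz2 hz1
    simp
  · exact absurd rfl hef

lemma edisj {s t u v : Pt} (hst : s ≠ t) (hsu : s ≠ u) (hsv : s ≠ v)
    (htu : t ≠ u) (htv : t ≠ v) (huv : u ≠ v) :
    EdgeDisjoint [s,t,v,u] [t,u,s,v] := by
  intro x y h1 h2
  have e1 : edgeList [s,t,v,u] = [(s,t),(t,v),(v,u)] := rfl
  have e2 : edgeList [t,u,s,v] = [(t,u),(u,s),(s,v)] := rfl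
  simp only [IsEdgeOf, e1, e2, List.mem_cons, List.not_mem_nil, or_false,
    Prod.mk.injEq] at h1 h2
  have hts := hst.symm; have hus := hsu.symm; have hvs := hsv.symm
  have hut := htu.symm; have hvt := htv.symm; have hvu := huv.symm
  rcases h1 with (⟨rfl,rfl⟩|⟨rfl,rfl⟩|⟨rfl,rfl⟩)|(⟨rfl,rfl⟩|⟨rfl,rfl⟩|⟨rfl,rfl⟩) <;>
    simp_all

lemma det3_swap23 (a b c : Pt) : det3 a c b = - det3 a b c := by
  simp only [det3]; ring

lemma sign_trans {A B C : ℝ} (h1 : A * B > 0) (h2 : A * C > 0) : B * C > 0 := by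
  nlinarith [mul_pos h1 h2, sq_nonneg A]

lemma key (S : Finset Pt) (s t u v : Pt)
    (hS : S = {s, t, u, v})
    (hst : s ≠ t) (hsu : s ≠ u) (hsv : s ≠ v)
    (htu : t ≠ u) (htv : t ≠ v) (huv : u ≠ v)
    (h1 : det3 s t v ≠ 0) (h2 : det3 t v u ≠ 0)
    (h3 : det3 t u s ≠ 0) (h4 : det3 u s v ≠ 0)
    (hA : det3 s t v * det3 s t u > 0)
    (hB : det3 s v t * det3 s v u > 0) :
    ∃ l₁ l₂ : List Pt, PlanePath S l₁ ∧ PlanePath S l₂ ∧ EdgeDisjoint l₁ l₂ ∧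
      l₁.head? = some s ∧ l₂.head? = some t := by
  refine ⟨[s,t,v,u], [t,u,s,v], ⟨?_, ?_, ?_⟩, ⟨?_, ?_, ?_⟩, ?_, rfl, rfl⟩
  · simp [hst, hsu, hsv, htu, htv, huv.symm]
  · rw [hS]; ext x; simp; tauto
  · exact cross3 h1 h2 (seg_disjoint hA)
  · simp [htu, htv, hst.symm, hsu.symm, hsv, huv]
  · rw [hS]; ext x; simp; tauto
  · exact cross3 h3 h4 (fun z hz1 hz2 => seg_disjoint hB z hz2 hz1)
  · exact edisj hst hsu hsv htu htv huv

/-- On a set of 4 points in general position with `s, t` consecutive hull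
vertices, there are two edge-disjoint plane Hamiltonian paths, one starting at `s`
and the other starting at `t`. -/
theorem stmt_15 (S : Finset Pt) (hcard : S.card = 4) (hgp : GenPos S)
    (s t : Pt) (hst : IsHullEdge S s t) :
    ∃ l₁ l₂ : List Pt, PlanePath S l₁ ∧ PlanePath S l₂ ∧ EdgeDisjoint l₁ l₂ ∧
      l₁.head? = some s ∧ l₂.head? = some t := by
  obtain ⟨hsS, htS, hstne, hside⟩ := hst
  have htS' : t ∈ S.erase s := Finset.mem_erase.mpr ⟨Ne.symm hstne, htS⟩
  have hcard2 : ((S.erase s).erase t).card = 2 := by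
    rw [Finset.card_erase_of_mem htS', Finset.card_erase_of_mem hsS, hcard]
  obtain ⟨u, v, huv, hT⟩ := Finset.card_eq_two.mp hcard2
  have huT : u ∈ (S.erase s).erase t := by rw [hT]; simp
  have hvT : v ∈ (S.erase s).erase t := by rw [hT]; simp
  have huS : u ∈ S := Finset.mem_of_mem_erase (Finset.mem_of_mem_erase huT)
  have hvS : v ∈ S := Finset.mem_of_mem_erase (Finset.mem_of_mem_erase hvT)
  have hut : u ≠ t := (Finset.mem_erase.mp huT).1
  have hus : u ≠ s := (Finset.mem_erase.mp (Finset.mem_of_mem_erase huT)).1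
  have hvt : v ≠ t := (Finset.mem_erase.mp hvT).1
  have hvs : v ≠ s := (Finset.mem_erase.mp (Finset.mem_of_mem_erase hvT)).1
  have hS : S = {s, t, u, v} := by
    have e1 : insert t ((S.erase s).erase t) = S.erase s := Finset.insert_erase htS'
    have e2 : insert s (S.erase s) = S := Finset.insert_erase hsS
    rw [← e2, ← e1, hT]
  have nd : ∀ a ∈ S, ∀ b ∈ S, ∀ c ∈ S, a ≠ b → a ≠ c → b ≠ c → det3 a b c ≠ 0 :=
    fun a ha b hb c hc hab hac hbc hdet =>
      hgp a ha b hb c hc hab hac hbc (collinear_of_det3 hab hdet)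
  have hprod : det3 s t u * det3 s t v > 0 := by
    rcases hside with h | h
    · exact mul_pos (h u huS hus hut) (h v hvS hvs hvt)
    · exact mul_pos_of_neg_of_neg (h u huS hus hut) (h v hvS hvs hvt)
  have hstu : det3 s t u ≠ 0 := nd s hsS t htS u huS hstne hus.symm hut.symm
  have hsuv : det3 s u v ≠ 0 := nd s hsS u huS v hvS hus.symm hvs.symm huv
  rcases (mul_ne_zero hstu hsuv).lt_or_gt with hneg | hpos
  · refine key S s t v u (by rw [hS]; ext x; simp; tauto) hstne hvs.symm hus.symm
      hvt.symm hut.symm huv.symm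
      (nd s hsS t htS u huS hstne hus.symm hut.symm)
      (nd t htS u huS v hvS hut.symm hvt.symm huv)
      (nd t htS v hvS s hsS hvt.symm hstne.symm hvs)
      (nd v hvS s hsS u huS hvs huv.symm hus.symm)
      ?_ ?_
    · exact hprod
    · rw [det3_swap23]
      nlinarith [hneg]
  · refine key S s t u v hS hstne hus.symm hvs.symm hut.symm hvt.symm huv
      (nd s hsS t htS v hvS hstne hvs.symm hvt.symm)
      (nd t htS v hvS u huS hvt.symm hut.symm huv.symm)
      (nd t htS u huS s hsS hut.symm hstne.symm hus)
      (nd u huS s hsS v hvS hus huv hvs.symm)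
      ?_ ?_
    · exact mul_comm (det3 s t u) (det3 s t v) ▸ hprod
    · have e1 : det3 s v t = -det3 s t v := det3_swap23 s t v
      have e2 : det3 s v u = -det3 s u v := det3_swap23 s u v
      rw [e1, e2]
      nlinarith [sign_trans hprod hpos]
end
end

section
/- Let S be a set of n points in general position in the plane with a horizontal segment ab between a, b ∈ S, and suppose s, t ∈ S \ {a, b} are such that s lies strictly above the line through a and b, and t lies strictly below it. Then there exists a plane Hamiltonian path on S with endpoints s and t containing the segment ab as an edge. -/
open Set
open scoped Classical

noncomputable section

-- chunk A: xprod basics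
def xprod (u v : Pt) : ℝ := u.1 * v.2 - u.2 * v.1

def xdot (u v : Pt) : ℝ := u.1 * v.1 + u.2 * v.2

lemma det3_eq_xprod (a b p : Pt) : det3 a b p = xprod (b - a) (p - a) := by
  simp only [det3, xprod, Prod.fst_sub, Prod.snd_sub]

lemma xprod_self (v : Pt) : xprod v v = 0 := by simp [xprod, mul_comm]

lemma xprod_anticomm (u v : Pt) : xprod u v = - xprod v u := by simp [xprod]; ring

lemma xprod_sub_right (v x y : Pt) : xprod v (x - y) = xprod v x - xprod v y := by
  simp [xprod, Prod.fst_sub, Prod.snd_sub]; ring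

lemma xprod_zero_left (v : Pt) : xprod 0 v = 0 := by simp [xprod]

lemma mem_seg_iff {x y z : Pt} :
    z ∈ segment ℝ x y ↔ ∃ θ : ℝ, 0 ≤ θ ∧ θ ≤ 1 ∧ z = (1 - θ) • x + θ • y := by
  rw [segment_eq_image]
  constructor
  · rintro ⟨θ, hθ, rfl⟩; exact ⟨θ, hθ.1, hθ.2, rfl⟩
  · rintro ⟨θ, h0, h1, rfl⟩; exact ⟨θ, ⟨h0, h1⟩, rfl⟩

lemma xprod_affine (v c x y : Pt) (θ : ℝ) :
    xprod v ((1 - θ) • x + θ • y - c) =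
      (1 - θ) * xprod v (x - c) + θ * xprod v (y - c) := by
  simp only [xprod, Prod.fst_sub, Prod.snd_sub, Prod.fst_add, Prod.snd_add,
    Prod.smul_fst, Prod.smul_snd, smul_eq_mul]
  ring
-- chunk B: halfplane / segment lemmas
section SegLemmas
variable {v c x y z : Pt}

lemma seg_nonneg (hx : 0 ≤ xprod v (x - c)) (hy : 0 ≤ xprod v (y - c))
    (hz : z ∈ segment ℝ x y) : 0 ≤ xprod v (z - c) := by
  obtain ⟨θ, h0, h1, rfl⟩ := mem_seg_iff.1 hz
  rw [xprod_affine]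
  nlinarith

lemma seg_nonpos (hx : xprod v (x - c) ≤ 0) (hy : xprod v (y - c) ≤ 0)
    (hz : z ∈ segment ℝ x y) : xprod v (z - c) ≤ 0 := by
  obtain ⟨θ, h0, h1, rfl⟩ := mem_seg_iff.1 hz
  rw [xprod_affine]
  nlinarith

lemma seg_pos (hx : 0 < xprod v (x - c)) (hy : 0 < xprod v (y - c))
    (hz : z ∈ segment ℝ x y) : 0 < xprod v (z - c) := by
  obtain ⟨θ, h0, h1, rfl⟩ := mem_seg_iff.1 hz
  rw [xprod_affine]
  rcases eq_or_lt_of_le h1 with rfl | h1'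
  · nlinarith
  · nlinarith

lemma seg_neg (hx : xprod v (x - c) < 0) (hy : xprod v (y - c) < 0)
    (hz : z ∈ segment ℝ x y) : xprod v (z - c) < 0 := by
  obtain ⟨θ, h0, h1, rfl⟩ := mem_seg_iff.1 hz
  rw [xprod_affine]
  rcases eq_or_lt_of_le h1 with rfl | h1'
  · nlinarith
  · nlinarith

lemma seg_zero (hx : xprod v (x - c) = 0) (hy : xprod v (y - c) = 0)
    (hz : z ∈ segment ℝ x y) : xprod v (z - c) = 0 := by
  obtain ⟨θ, h0, h1, rfl⟩ := mem_seg_iff.1 hz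
  rw [xprod_affine, hx, hy]; ring

/-- If the segment goes from strictly-positive side to the line, the only point on the
line is the second endpoint. -/
lemma seg_zero_eq_right (hx : 0 < xprod v (x - c)) (hy : xprod v (y - c) = 0)
    (hz : z ∈ segment ℝ x y) (h0 : xprod v (z - c) = 0) : z = y := by
  obtain ⟨θ, h0', h1, rfl⟩ := mem_seg_iff.1 hz
  rw [xprod_affine, hy, mul_zero, add_zero] at h0
  have : θ = 1 := by
    rcases eq_or_lt_of_le h1 with h | h
    · exact h
    · nlinarith
  subst this
  simp

lemma seg_zero_eq_left (hx : xprod v (x - c) = 0) (hy : 0 < xprod v (y - c))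
    (hz : z ∈ segment ℝ x y) (h0 : xprod v (z - c) = 0) : z = x :=
  seg_zero_eq_right hy hx (segment_symm ℝ x y ▸ hz) h0

end SegLemmas

lemma exists_smul_of_xprod_eq_zero {u w : Pt} (hu0 : u ≠ 0)
    (hx : u.1 * w.2 - u.2 * w.1 = 0) : ∃ t : ℝ, w = t • u := by
  rcases eq_or_ne u.1 0 with h1 | h1
  · have h2 : u.2 ≠ 0 := fun h2 => hu0 (Prod.ext h1 h2)
    have hw1 : w.1 = 0 := by
      rw [h1] at hx
      have : u.2 * w.1 = 0 := by linarith
      rcases mul_eq_zero.1 this with h | h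
      · exact absurd h h2
      · exact h
    refine ⟨w.2 / u.2, ?_⟩
    apply Prod.ext
    · simp [Prod.smul_fst, smul_eq_mul, h1, hw1]
    · simp [Prod.smul_snd, smul_eq_mul]
      field_simp
  · refine ⟨w.1 / u.1, ?_⟩
    apply Prod.ext
    · simp [Prod.smul_fst, smul_eq_mul]
      field_simp
    · simp [Prod.smul_snd, smul_eq_mul]
      field_simp
      nlinarith [hx]

lemma collinear_of_xprod_eq_zero {p q r : Pt} (h : xprod (q - p) (r - p) = 0) :
    Collinear ℝ ({p, q, r} : Set Pt) := by
  rcases eq_or_ne q p with rfl | hqp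
  · have : ({q, q, r} : Set Pt) = {q, r} := by simp
    rw [this]
    exact collinear_pair ℝ q r
  · rw [collinear_iff_of_mem (Set.mem_insert p {q, r})]
    refine ⟨q - p, ?_⟩
    have key : ∀ x : Pt, (∃ t : ℝ, x - p = t • (q - p)) → ∃ t : ℝ, x = t • (q - p) +ᵥ p := by
      rintro x ⟨t, ht⟩
      exact ⟨t, by rw [← ht]; simp [vadd_eq_add]⟩
    rintro x (rfl | rfl | rfl)
    · exact key _ ⟨0, by simp⟩
    · exact key _ ⟨1, by simp⟩
    · exact key _ (exists_smul_of_xprod_eq_zero (sub_ne_zero.2 hqp) h)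
-- chunk C: edgeList structure lemmas
def NC (l : List Pt) : Prop :=
  ∀ e ∈ edgeList l, ∀ f ∈ edgeList l, e ≠ f →
    segment ℝ e.1 e.2 ∩ segment ℝ f.1 f.2 ⊆
      (({e.1, e.2} : Set Pt) ∩ ({f.1, f.2} : Set Pt))

lemma edgeList_nil : edgeList [] = [] := rfl
lemma edgeList_single (x : Pt) : edgeList [x] = [] := rfl

lemma edgeList_cons (x : Pt) (l : List Pt) (m : Pt) (hm : l.head? = some m) :
    edgeList (x :: l) = (x, m) :: edgeList l := by
  cases l with
  | nil => simp at hm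
  | cons y t => simp at hm; subst hm; rfl

lemma mem_of_mem_edgeList {e : Pt × Pt} {l : List Pt} (h : e ∈ edgeList l) :
    e.1 ∈ l ∧ e.2 ∈ l := by
  unfold edgeList at h
  have := List.of_mem_zip h
  exact ⟨this.1, List.mem_of_mem_tail this.2⟩

lemma edgeList_ne {e : Pt × Pt} {l : List Pt} (hl : l.Nodup) (h : e ∈ edgeList l) :
    e.1 ≠ e.2 := by
  induction l with
  | nil => simp [edgeList] at h
  | cons x t ih =>
    cases t with
    | nil => simp [edgeList] at h
    | cons y u =>
      rw [edgeList_cons x (y :: u) y rfl] at h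
      rcases List.mem_cons.1 h with rfl | h
      · intro he
        have hxy : x = y := he
        exact (List.nodup_cons.1 hl).1 (hxy ▸ List.mem_cons_self)
      · exact ih (List.nodup_cons.1 hl).2 h

lemma edgeList_append (l₁ l₂ : List Pt) (u v : Pt)
    (h₁ : l₁.getLast? = some u) (h₂ : l₂.head? = some v) :
    edgeList (l₁ ++ l₂) = edgeList l₁ ++ (u, v) :: edgeList l₂ := by
  induction l₁ with
  | nil => simp at h₁
  | cons x t ih =>
    cases t with
    | nil =>
      simp at h₁
      subst h₁
      cases l₂ with
      | nil => simp at h₂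
      | cons y u' =>
        simp at h₂; subst h₂
        simp [edgeList_single]
        exact edgeList_cons _ _ _ rfl
    | cons y t' =>
      have hlast : (y :: t').getLast? = some u := by
        rwa [List.getLast?_cons_cons] at h₁
      have := ih hlast
      have hcons : edgeList ((x :: y :: t') ++ l₂) = (x, y) :: edgeList ((y :: t') ++ l₂) := by
        exact edgeList_cons _ _ _ rfl
      rw [hcons, this]
      rw [edgeList_cons x (y :: t') y rfl]
      simp

lemma edgeList_concat (l : List Pt) (u y : Pt) (h : l.getLast? = some u) :
    edgeList (l ++ [y]) = edgeList l ++ [(u, y)] := by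
  rw [edgeList_append l [y] u y h rfl, edgeList_single]

lemma mem_edgeList_reverse {x y : Pt} {l : List Pt} :
    (x, y) ∈ edgeList l.reverse ↔ (y, x) ∈ edgeList l := by
  induction l with
  | nil => simp [edgeList]
  | cons a t ih =>
    cases t with
    | nil => simp [edgeList]
    | cons b t' =>
      have h1 : edgeList (a :: b :: t') = (a, b) :: edgeList (b :: t') :=
        edgeList_cons _ _ _ rfl
      have h2 : (a :: b :: t').reverse = (b :: t').reverse ++ [a] := by simp
      have h3 : (b :: t').reverse.getLast? = some b := by
        rw [List.getLast?_reverse]; rfl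
      rw [h1, h2, edgeList_concat _ b a h3]
      simp only [List.mem_append, List.mem_singleton, List.mem_cons, ih, Prod.ext_iff]
      tauto

lemma NC_reverse {l : List Pt} (h : NC l) : NC l.reverse := by
  intro e he f hf hef
  obtain ⟨e1, e2⟩ := e
  obtain ⟨f1, f2⟩ := f
  have he' := mem_edgeList_reverse.1 he
  have hf' := mem_edgeList_reverse.1 hf
  have hne : (e2, e1) ≠ (f2, f1) := by
    intro hc; rw [Prod.ext_iff] at hc; exact hef (by rw [Prod.ext_iff]; exact ⟨hc.2, hc.1⟩)
  have := h _ he' _ hf' hne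
  intro z hz
  have hz' : z ∈ segment ℝ e2 e1 ∩ segment ℝ f2 f1 := by
    rw [segment_symm, Set.inter_comm, segment_symm, Set.inter_comm]
    exact hz
  have := this hz'
  simp only [Set.mem_inter_iff, Set.mem_insert_iff, Set.mem_singleton_iff] at this ⊢
  tauto
-- chunk D: angular minimum
lemma xdot_xprod_identity (w u v : Pt) :
    xdot w u * xprod w v - xdot w v * xprod w u = xdot w w * xprod u v := by
  simp only [xdot, xprod]; ring

lemma xdot_self_pos {w : Pt} (hw : w ≠ 0) : 0 < xdot w w := by
  rcases eq_or_ne w.1 0 with h1 | h1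
  · have h2 : w.2 ≠ 0 := fun h2 => hw (Prod.ext h1 h2)
    simp only [xdot, h1]
    nlinarith [mul_self_pos.2 h2]
  · simp only [xdot]
    nlinarith [mul_self_pos.2 h1, mul_self_nonneg w.2]

lemma genpos_mono {T V : Finset Pt} (h : T ⊆ V) (hV : GenPos V) : GenPos T :=
  fun p hp q hq r hr => hV p (h hp) q (h hq) r (h hr)

lemma genpos_xprod_ne_zero {V : Finset Pt} (hV : GenPos V) {p q r : Pt}
    (hp : p ∈ V) (hq : q ∈ V) (hr : r ∈ V)
    (hpq : p ≠ q) (hpr : p ≠ r) (hqr : q ≠ r) : xprod (q - p) (r - p) ≠ 0 :=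
  fun h => hV p hp q hq r hr hpq hpr hqr (collinear_of_xprod_eq_zero h)

lemma exists_min_dir (p w : Pt) (V : Finset Pt) (hV : V.Nonempty)
    (hp : p ∉ V)
    (hgp : ∀ q ∈ V, ∀ r ∈ V, q ≠ r → xprod (q - p) (r - p) ≠ 0)
    (hw : ∀ q ∈ V, 0 < xprod w (q - p)) :
    ∃ m ∈ V, ∀ q ∈ V, q ≠ m → 0 < xprod (m - p) (q - p) := by
  obtain ⟨m, hm, hmax⟩ :=
    V.exists_max_image (fun q => xdot w (q - p) / xprod w (q - p)) hV
  refine ⟨m, hm, fun q hq hne => ?_⟩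
  have h1 := hmax q hq
  have hdm : 0 < xprod w (m - p) := hw m hm
  have hdq : 0 < xprod w (q - p) := hw q hq
  have hww : 0 < xdot w w := by
    apply xdot_self_pos
    intro h0
    rw [h0] at hdm
    simp [xprod] at hdm
  rw [div_le_div_iff₀ hdq hdm] at h1
  have h2 : 0 ≤ xdot w w * xprod (m - p) (q - p) := by
    rw [← xdot_xprod_identity w (m - p) (q - p)]
    nlinarith
  have h3 : xprod (m - p) (q - p) ≠ 0 := hgp m hm q hq (Ne.symm hne)
  have h4 : 0 ≤ xprod (m - p) (q - p) := nonneg_of_mul_nonneg_right h2 hww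
  exact lt_of_le_of_ne h4 (Ne.symm h3)
-- chunk E: star-step geometric lemmas and list bookkeeping
lemma xprod_zero_right (v : Pt) : xprod v 0 = 0 := by simp [xprod]

lemma seg_zero_eq_right_neg {v c x y z : Pt} (hx : xprod v (x - c) < 0)
    (hy : xprod v (y - c) = 0) (hz : z ∈ segment ℝ x y)
    (h0 : xprod v (z - c) = 0) : z = y := by
  have hx' : 0 < xprod (-v) (x - c) := by
    simp only [xprod, Prod.fst_neg, Prod.snd_neg] at *; nlinarith
  have hy' : xprod (-v) (y - c) = 0 := by
    simp only [xprod, Prod.fst_neg, Prod.snd_neg] at *; linarith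
  have h0' : xprod (-v) (z - c) = 0 := by
    simp only [xprod, Prod.fst_neg, Prod.snd_neg] at *; linarith
  exact seg_zero_eq_right hx' hy' hz h0'

lemma star_concat {v c m p x1 x2 : Pt}
    (hm : xprod v (m - c) = 0) (hp : xprod v (p - c) = 0)
    (h1 : x1 = m ∨ 0 < xprod v (x1 - c)) (h2 : x2 = m ∨ 0 < xprod v (x2 - c))
    (hne : x1 ≠ x2) :
    segment ℝ m p ∩ segment ℝ x1 x2 ⊆ (({m, p} : Set Pt) ∩ {x1, x2}) := by
  rintro z ⟨hz1, hz2⟩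
  have hz0 : xprod v (z - c) = 0 := seg_zero hm hp hz1
  rcases h1 with rfl | h1
  · rcases h2 with rfl | h2
    · exact absurd rfl hne
    · have : z = x1 := seg_zero_eq_left hm h2 hz2 hz0
      subst this
      exact ⟨Or.inl rfl, Or.inl rfl⟩
  · rcases h2 with rfl | h2
    · have : z = x2 := seg_zero_eq_right h1 hm hz2 hz0
      subst this
      exact ⟨Or.inl rfl, Or.inr rfl⟩
    · exact absurd hz0 (ne_of_gt (seg_pos h1 h2 hz2))

lemma star_cons {v c s m₂ p' x1 x2 : Pt}
    (hs : xprod v (s - c) < 0) (hm₂ : xprod v (m₂ - c) = 0)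
    (hp' : xprod v (p' - c) = 0) (hpm : p' ≠ m₂)
    (h1 : x1 = m₂ ∨ x1 = p' ∨ 0 < xprod v (x1 - c))
    (h2 : x2 = m₂ ∨ x2 = p' ∨ 0 < xprod v (x2 - c))
    (hne : x1 ≠ x2) :
    segment ℝ s m₂ ∩ segment ℝ x1 x2 ⊆ (({s, m₂} : Set Pt) ∩ {x1, x2}) := by
  rintro z ⟨hz1, hz2⟩
  have g1 : 0 ≤ xprod v (x1 - c) := by
    rcases h1 with rfl | rfl | h <;> [exact le_of_eq hm₂.symm; exact le_of_eq hp'.symm; exact le_of_lt h]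
  have g2 : 0 ≤ xprod v (x2 - c) := by
    rcases h2 with rfl | rfl | h <;> [exact le_of_eq hm₂.symm; exact le_of_eq hp'.symm; exact le_of_lt h]
  have hzle : xprod v (z - c) ≤ 0 := seg_nonpos (le_of_lt hs) (le_of_eq hm₂) hz1
  have hzge : 0 ≤ xprod v (z - c) := seg_nonneg g1 g2 hz2
  have hz0 : xprod v (z - c) = 0 := le_antisymm hzle hzge
  have hzm : z = m₂ := seg_zero_eq_right_neg hs hm₂ hz1 hz0
  subst hzm
  refine ⟨Or.inr rfl, ?_⟩
  rcases h1 with rfl | rfl | h1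
  · exact Or.inl rfl
  · rcases h2 with rfl | rfl | h2
    · exact Or.inr rfl
    · exact absurd rfl hne
    · have : z = x1 := seg_zero_eq_left hp' h2 hz2 hz0
      exact absurd this.symm hpm
  · rcases h2 with rfl | rfl | h2
    · exact Or.inr rfl
    · have : z = x2 := seg_zero_eq_right h1 hp' hz2 hz0
      exact absurd this.symm hpm
    · exact absurd hz0 (ne_of_gt (seg_pos h1 h2 hz2))

lemma ne_nil_of_head?_eq_some {l : List Pt} {s : Pt} (h : l.head? = some s) :
    l ≠ [] := by
  intro h0; subst h0; simp at h

lemma getLast?_cons_of_ne_nil {l : List Pt} (x : Pt) (h : l ≠ []) :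
    (x :: l).getLast? = l.getLast? := by
  cases l with
  | nil => exact absurd rfl h
  | cons y t => exact List.getLast?_cons_cons

lemma head?_append_left {l₁ l₂ : List Pt} (h : l₁ ≠ []) :
    (l₁ ++ l₂).head? = l₁.head? := by
  cases l₁ with
  | nil => exact absurd rfl h
  | cons x t => rfl

lemma getLast?_append_right {l₁ l₂ : List Pt} (h : l₂ ≠ []) :
    (l₁ ++ l₂).getLast? = l₂.getLast? := by
  induction l₁ with
  | nil => simp
  | cons x t ih =>
    have : t ++ l₂ ≠ [] := by
      intro h0
      rcases List.append_eq_nil_iff.1 h0 with ⟨_, h2⟩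
      exact h h2
    rw [List.cons_append, getLast?_cons_of_ne_nil x this, ih]
-- chunk F: the key construction lemma
lemma key_s17 : ∀ (n : ℕ) (V : Finset Pt), V.card ≤ n → GenPos V →
    ∀ p ∈ V, ∀ s ∈ V, ∀ w : Pt,
    (∀ q ∈ V, q ≠ p → 0 < xprod w (q - p)) → (s = p → V = {p}) →
    ∃ l : List Pt, l.Nodup ∧ l.toFinset = V ∧ l.head? = some s ∧
      l.getLast? = some p ∧ NC l := by
  intro n
  induction n with
  | zero =>
    intro V hcard _ p hp
    rw [Nat.le_zero, Finset.card_eq_zero] at hcard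
    subst hcard
    simp at hp
  | succ n ih =>
    intro V hcard hgp p hp s hs w hw hsp
    by_cases hVp : V = {p}
    · have hsp' : s = p := by rw [hVp, Finset.mem_singleton] at hs; exact hs
      subst hsp'
      refine ⟨[s], by simp, by simp [hVp], rfl, rfl, ?_⟩
      intro e he
      simp [edgeList_single] at he
    · have hspn : s ≠ p := fun h => hVp (hsp h)
      have hsV' : s ∈ V.erase p := Finset.mem_erase.2 ⟨hspn, hs⟩
      have hV'ne : (V.erase p).Nonempty := ⟨s, hsV'⟩
      have hpV' : p ∉ V.erase p := Finset.notMem_erase p V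
      have hgp' : ∀ q ∈ V.erase p, ∀ r ∈ V.erase p, q ≠ r →
          xprod (q - p) (r - p) ≠ 0 := by
        intro q hq r hr hqr
        exact genpos_xprod_ne_zero hgp hp (Finset.mem_of_mem_erase hq)
          (Finset.mem_of_mem_erase hr) (Ne.symm (Finset.ne_of_mem_erase hq))
          (Ne.symm (Finset.ne_of_mem_erase hr)) hqr
      have hwV' : ∀ q ∈ V.erase p, 0 < xprod w (q - p) := fun q hq =>
        hw q (Finset.mem_of_mem_erase hq) (Finset.ne_of_mem_erase hq)
      obtain ⟨m, hmV', hm⟩ := exists_min_dir p w (V.erase p) hV'ne hpV' hgp' hwV'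
      have hmV : m ∈ V := Finset.mem_of_mem_erase hmV'
      have hmp : m ≠ p := Finset.ne_of_mem_erase hmV'
      by_cases hsm : s = m
      · -- s is the angular minimum around p
        subst hsm
        by_cases hV'' : ((V.erase p).erase s).Nonempty
        · -- at least three points
          have hpV'' : p ∉ (V.erase p).erase s := fun h =>
            hpV' (Finset.mem_of_mem_erase h)
          have hgp'' : ∀ q ∈ (V.erase p).erase s, ∀ r ∈ (V.erase p).erase s,
              q ≠ r → xprod (q - p) (r - p) ≠ 0 := fun q hq r hr hqr =>
            hgp' q (Finset.mem_of_mem_erase hq) r (Finset.mem_of_mem_erase hr) hqr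
          have hw'' : ∀ q ∈ (V.erase p).erase s, 0 < xprod w (q - p) := fun q hq =>
            hwV' q (Finset.mem_of_mem_erase hq)
          obtain ⟨m₂, hm₂V'', hm₂⟩ :=
            exists_min_dir p w ((V.erase p).erase s) hV'' hpV'' hgp'' hw''
          have hm₂V' : m₂ ∈ V.erase p := Finset.mem_of_mem_erase hm₂V''
          have hm₂s : m₂ ≠ s := Finset.ne_of_mem_erase hm₂V''
          have hm₂p : m₂ ≠ p := Finset.ne_of_mem_erase hm₂V'
          have hm₂V : m₂ ∈ V := Finset.mem_of_mem_erase hm₂V'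
          have hpW : p ∈ V.erase s := Finset.mem_erase.2 ⟨Ne.symm hspn, hp⟩
          have hm₂W : m₂ ∈ V.erase s := Finset.mem_erase.2 ⟨hm₂s, hm₂V⟩
          have hcardW : (V.erase s).card ≤ n := by
            rw [Finset.card_erase_of_mem hs]
            omega
          obtain ⟨Q, hQnd, hQfin, hQhead, hQlast, hQNC⟩ :=
            ih (V.erase s) hcardW (genpos_mono (Finset.erase_subset s V) hgp) p hpW
              m₂ hm₂W w
              (fun q hq hqp => hw q (Finset.mem_of_mem_erase hq) hqp)
              (fun h => absurd h hm₂p)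
          have hQne : Q ≠ [] := ne_nil_of_head?_eq_some hQhead
          have hsQ : s ∉ Q := by
            intro h
            have : s ∈ V.erase s := hQfin ▸ List.mem_toFinset.2 h
            exact (Finset.notMem_erase s V) this
          refine ⟨s :: Q, ?_, ?_, rfl, ?_, ?_⟩
          · exact List.nodup_cons.2 ⟨hsQ, hQnd⟩
          · rw [List.toFinset_cons, hQfin, Finset.insert_erase hs]
          · rw [getLast?_cons_of_ne_nil s hQne, hQlast]
          · -- NC
            have hEL : edgeList (s :: Q) = (s, m₂) :: edgeList Q :=
              edgeList_cons s Q m₂ hQhead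
            -- facts for star_cons
            have hgs : xprod (m₂ - p) (s - p) < 0 := by
              have := hm m₂ hm₂V' hm₂s
              rw [xprod_anticomm] at this
              linarith
            have hgm₂ : xprod (m₂ - p) (m₂ - p) = 0 := xprod_self _
            have hgpp : xprod (m₂ - p) (p - p) = 0 := by
              rw [sub_self, xprod_zero_right]
            have hvert : ∀ x, x ∈ Q → x = m₂ ∨ x = p ∨ 0 < xprod (m₂ - p) (x - p) := by
              intro x hx
              have hxW : x ∈ V.erase s := hQfin ▸ List.mem_toFinset.2 hx
              by_cases hxm : x = m₂
              · exact Or.inl hxm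
              by_cases hxp : x = p
              · exact Or.inr (Or.inl hxp)
              · have hxV'' : x ∈ (V.erase p).erase s :=
                  Finset.mem_erase.2 ⟨(Finset.mem_erase.1 hxW).1,
                    Finset.mem_erase.2 ⟨hxp, (Finset.mem_erase.1 hxW).2⟩⟩
                exact Or.inr (Or.inr (hm₂ x hxV'' hxm))
            have hmix : ∀ f ∈ edgeList Q,
                segment ℝ s m₂ ∩ segment ℝ f.1 f.2 ⊆
                  (({s, m₂} : Set Pt) ∩ {f.1, f.2}) := by
              intro f hf
              have hf1 := (mem_of_mem_edgeList hf).1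
              have hf2 := (mem_of_mem_edgeList hf).2
              exact star_cons hgs hgm₂ hgpp (Ne.symm hm₂p)
                (hvert f.1 hf1) (hvert f.2 hf2) (edgeList_ne hQnd hf)
            intro e he f hf hef
            rw [hEL, List.mem_cons] at he hf
            rcases he with rfl | he
            · rcases hf with rfl | hf
              · exact absurd rfl hef
              · exact hmix f hf
            · rcases hf with rfl | hf
              · intro z hz
                have hz' : z ∈ segment ℝ (s, m₂).1 (s, m₂).2 ∩ segment ℝ e.1 e.2 :=
                  ⟨hz.2, hz.1⟩
                have := hmix e he hz'
                exact ⟨this.2, this.1⟩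
              · exact hQNC e he f hf hef
        · -- exactly two points: V = {s, p}
          have hV'single : V.erase p = {s} := by
            rw [Finset.not_nonempty_iff_eq_empty] at hV''
            apply Finset.eq_singleton_iff_unique_mem.2
            refine ⟨hsV', fun x hx => ?_⟩
            by_contra hxs
            have : x ∈ (V.erase p).erase s := Finset.mem_erase.2 ⟨hxs, hx⟩
            rw [hV''] at this
            simp at this
          have hVeq : V = {s, p} := by
            have := Finset.insert_erase hp
            rw [hV'single] at this
            rw [← this]
            ext x
            simp [or_comm]
          refine ⟨[s, p], by simp [hspn], by rw [hVeq]; ext x; simp, rfl, rfl, ?_⟩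
          intro e he f hf hef
          have he' : e = (s, p) := by
            rw [edgeList_cons s [p] p rfl, edgeList_single] at he
            simpa using he
          have hf' : f = (s, p) := by
            rw [edgeList_cons s [p] p rfl, edgeList_single] at hf
            simpa using hf
          rw [he', hf'] at hef
          exact absurd rfl hef
      · -- s is not the angular minimum: recurse with center m
        have hwm : ∀ q ∈ V.erase p, q ≠ m → 0 < xprod (m - p) (q - m) := by
          intro q hq hqm
          have h1 := hm q hq hqm
          have h2 : q - m = (q - p) - (m - p) := by
            rw [sub_sub_sub_cancel_right]
          rw [h2, xprod_sub_right, xprod_self, sub_zero]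
          exact h1
        have hcard' : (V.erase p).card ≤ n := by
          rw [Finset.card_erase_of_mem hp]
          omega
        obtain ⟨P, hPnd, hPfin, hPhead, hPlast, hPNC⟩ :=
          ih (V.erase p) hcard' (genpos_mono (Finset.erase_subset p V) hgp) m hmV'
            s hsV' (m - p) hwm (fun h => absurd h hsm)
        have hPne : P ≠ [] := ne_nil_of_head?_eq_some hPhead
        have hpP : p ∉ P := by
          intro h
          exact hpV' (hPfin ▸ List.mem_toFinset.2 h)
        refine ⟨P ++ [p], ?_, ?_, ?_, ?_, ?_⟩
        · rw [List.nodup_append]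
          exact ⟨hPnd, List.nodup_singleton p, by
            intro x hx y hx'
            rw [List.mem_singleton] at hx'
            subst hx'
            rintro rfl
            exact hpP hx⟩
        · rw [List.toFinset_append, hPfin]
          ext x
          simp only [List.toFinset_cons, List.toFinset_nil, Finset.mem_union,
            Finset.mem_insert, Finset.mem_erase, Finset.notMem_empty,
            Finset.mem_singleton, or_false]
          constructor
          · rintro (⟨_, h⟩ | rfl) <;> [exact h; exact hp]
          · intro hx
            by_cases hxp : x = p
            · exact Or.inr hxp
            · exact Or.inl ⟨hxp, hx⟩
        · rw [head?_append_left hPne, hPhead]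
        · exact List.getLast?_concat
        · -- NC
          have hEL : edgeList (P ++ [p]) = edgeList P ++ [(m, p)] :=
            edgeList_concat P m p hPlast
          have hgm : xprod (m - p) (m - p) = 0 := xprod_self _
          have hgpp : xprod (m - p) (p - p) = 0 := by rw [sub_self, xprod_zero_right]
          have hvert : ∀ x, x ∈ P → x = m ∨ 0 < xprod (m - p) (x - p) := by
            intro x hx
            have hxV' : x ∈ V.erase p := hPfin ▸ List.mem_toFinset.2 hx
            by_cases hxm : x = m
            · exact Or.inl hxm
            · exact Or.inr (hm x hxV' hxm)
          have hmix : ∀ f ∈ edgeList P,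
              segment ℝ m p ∩ segment ℝ f.1 f.2 ⊆
                (({m, p} : Set Pt) ∩ {f.1, f.2}) := by
            intro f hf
            exact star_concat hgm hgpp (hvert f.1 (mem_of_mem_edgeList hf).1)
              (hvert f.2 (mem_of_mem_edgeList hf).2) (edgeList_ne hPnd hf)
          intro e he f hf hef
          rw [hEL, List.mem_append, List.mem_singleton] at he hf
          rcases he with he | rfl
          · rcases hf with hf | rfl
            · exact hPNC e he f hf hef
            · intro z hz
              have hz' : z ∈ segment ℝ (m, p).1 (m, p).2 ∩ segment ℝ e.1 e.2 :=
                ⟨hz.2, hz.1⟩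
              have := hmix e he hz'
              exact ⟨this.2, this.1⟩
          · rcases hf with hf | rfl
            · exact hmix f hf
            · exact absurd rfl hef
-- chunk G: assembly
lemma xprod_lower (a b q : Pt) : xprod (a - b) (q - b) = - det3 a b q := by
  simp only [xprod, det3, Prod.fst_sub, Prod.snd_sub]; ring

lemma det3_self_right (a b : Pt) : det3 a b b = 0 := by simp [det3]; ring

lemma det3_self_mid (a b : Pt) : det3 a b a = 0 := by simp [det3]

/-- If `s` and `t` lie in distinct open halfplanes determined by the line
through `a` and `b` (with `s, t ∉ {a, b}`), then there is a plane Hamiltonian path on `S`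
with endpoints `s` and `t` containing the segment `ab` as an edge. -/
theorem stmt_17 (S : Finset Pt) (hgp : GenPos S)
    (a b : Pt) (ha : a ∈ S) (hb : b ∈ S) (hab : a ≠ b)
    (s t : Pt) (hs : s ∈ S) (ht : t ∈ S)
    (hsa : s ≠ a) (hsb : s ≠ b) (hta : t ≠ a) (htb : t ≠ b)
    (hsup : 0 < det3 a b s) (htdown : det3 a b t < 0) :
    ∃ l : List Pt, PlanePath S l ∧ l.head? = some s ∧ l.getLast? = some t ∧
      IsEdgeOf a b l := by
  classical
  set U : Finset Pt := S.filter (fun q => 0 < det3 a b q) with hU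
  set D : Finset Pt := S.filter (fun q => det3 a b q < 0) with hD
  have hUsub : insert a U ⊆ S := by
    intro x hx
    rcases Finset.mem_insert.1 hx with rfl | hx
    · exact ha
    · exact (Finset.mem_filter.1 hx).1
  have hDsub : insert b D ⊆ S := by
    intro x hx
    rcases Finset.mem_insert.1 hx with rfl | hx
    · exact hb
    · exact (Finset.mem_filter.1 hx).1
  have hsU : s ∈ insert a U :=
    Finset.mem_insert_of_mem (Finset.mem_filter.2 ⟨hs, hsup⟩)
  have htD : t ∈ insert b D :=
    Finset.mem_insert_of_mem (Finset.mem_filter.2 ⟨ht, htdown⟩)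
  -- upper path from s to a
  obtain ⟨Pup, hPnd, hPfin, hPhead, hPlast, hPNC⟩ :=
    key_s17 (insert a U).card (insert a U) le_rfl (genpos_mono hUsub hgp)
      a (Finset.mem_insert_self a U) s hsU (b - a)
      (by
        intro q hq hqa
        rcases Finset.mem_insert.1 hq with rfl | hq
        · exact absurd rfl hqa
        · rw [← det3_eq_xprod]
          exact (Finset.mem_filter.1 hq).2)
      (fun h => absurd h hsa)
  -- lower path from t to b
  obtain ⟨Pdn, hQnd, hQfin, hQhead, hQlast, hQNC⟩ :=
    key_s17 (insert b D).card (insert b D) le_rfl (genpos_mono hDsub hgp)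
      b (Finset.mem_insert_self b D) t htD (a - b)
      (by
        intro q hq hqb
        rcases Finset.mem_insert.1 hq with rfl | hq
        · exact absurd rfl hqb
        · rw [xprod_lower]
          have := (Finset.mem_filter.1 hq).2
          linarith)
      (fun h => absurd h htb)
  set L : List Pt := Pdn.reverse with hL
  have hLnd : L.Nodup := List.nodup_reverse.2 hQnd
  have hLfin : L.toFinset = insert b D := by rw [hL, List.toFinset_reverse, hQfin]
  have hLhead : L.head? = some b := by rw [hL, List.head?_reverse, hQlast]
  have hLlast : L.getLast? = some t := by rw [hL, List.getLast?_reverse, hQhead]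
  have hLNC : NC L := NC_reverse hQNC
  have hPne : Pup ≠ [] := ne_nil_of_head?_eq_some hPhead
  have hLne : L ≠ [] := ne_nil_of_head?_eq_some hLhead
  -- memberships and sign facts
  have upProp : ∀ x ∈ Pup, 0 ≤ xprod (b - a) (x - a) ∧
      (xprod (b - a) (x - a) = 0 → x = a) := by
    intro x hx
    have : x ∈ insert a U := hPfin ▸ List.mem_toFinset.2 hx
    rcases Finset.mem_insert.1 this with rfl | hx'
    · constructor
      · rw [sub_self, xprod_zero_right]
      · intro _; rfl
    · have h1 : 0 < det3 a b x := (Finset.mem_filter.1 hx').2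
      rw [det3_eq_xprod] at h1
      exact ⟨le_of_lt h1, fun h => absurd h (ne_of_gt h1)⟩
  have dnProp : ∀ x ∈ L, xprod (b - a) (x - a) ≤ 0 ∧
      (xprod (b - a) (x - a) = 0 → x = b) := by
    intro x hx
    have : x ∈ insert b D := hLfin ▸ List.mem_toFinset.2 hx
    rcases Finset.mem_insert.1 this with rfl | hx'
    · constructor
      · rw [← det3_eq_xprod, det3_self_right]
      · intro _; rfl
    · have h1 : det3 a b x < 0 := (Finset.mem_filter.1 hx').2
      rw [det3_eq_xprod] at h1
      exact ⟨le_of_lt h1, fun h => absurd h (ne_of_lt h1)⟩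
  have hga : xprod (b - a) (a - a) = 0 := by rw [sub_self, xprod_zero_right]
  have hgb : xprod (b - a) (b - a) = 0 := xprod_self _
  -- an upper edge meets the line only in a (if a is one of its endpoints)
  have upLine : ∀ e ∈ edgeList Pup, ∀ z, z ∈ segment ℝ e.1 e.2 →
      xprod (b - a) (z - a) = 0 → z = a ∧ (z = e.1 ∨ z = e.2) := by
    intro e he z hz hz0
    have h1 := upProp e.1 (mem_of_mem_edgeList he).1
    have h2 := upProp e.2 (mem_of_mem_edgeList he).2
    have hne := edgeList_ne hPnd he
    rcases eq_or_lt_of_le h1.1 with h1' | h1'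
    · have he1a : e.1 = a := h1.2 h1'.symm
      have h2' : 0 < xprod (b - a) (e.2 - a) := by
        rcases eq_or_lt_of_le h2.1 with h2' | h2'
        · exact absurd (he1a.trans (h2.2 h2'.symm).symm) hne
        · exact h2'
      have := seg_zero_eq_left h1'.symm h2' hz hz0
      exact ⟨this.trans he1a, Or.inl this⟩
    · rcases eq_or_lt_of_le h2.1 with h2' | h2'
      · have := seg_zero_eq_right h1' h2'.symm hz hz0
        exact ⟨this.trans (h2.2 h2'.symm), Or.inr this⟩
      · exact absurd hz0 (ne_of_gt (seg_pos h1' h2' hz))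
  have dnLine : ∀ f ∈ edgeList L, ∀ z, z ∈ segment ℝ f.1 f.2 →
      xprod (b - a) (z - a) = 0 → z = b ∧ (z = f.1 ∨ z = f.2) := by
    intro f hf z hz hz0
    have h1 := dnProp f.1 (mem_of_mem_edgeList hf).1
    have h2 := dnProp f.2 (mem_of_mem_edgeList hf).2
    have hne := edgeList_ne hLnd hf
    rcases eq_or_lt_of_le h1.1 with h1' | h1'
    · have hf1b : f.1 = b := h1.2 h1'
      have h2' : xprod (b - a) (f.2 - a) < 0 := by
        rcases eq_or_lt_of_le h2.1 with h2' | h2'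
        · exact absurd (hf1b.trans (h2.2 h2').symm) hne
        · exact h2'
      have hz' : z ∈ segment ℝ f.2 f.1 := segment_symm ℝ f.1 f.2 ▸ hz
      have := seg_zero_eq_right_neg h2' h1' hz' hz0
      exact ⟨this.trans hf1b, Or.inl this⟩
    · rcases eq_or_lt_of_le h2.1 with h2' | h2'
      · have := seg_zero_eq_right_neg h1' h2' hz hz0
        exact ⟨this.trans (h2.2 h2'), Or.inr this⟩
      · exact absurd hz0 (ne_of_lt (seg_neg h1' h2' hz))
  -- cross conditions
  have updown : ∀ e ∈ edgeList Pup, ∀ f ∈ edgeList L,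
      segment ℝ e.1 e.2 ∩ segment ℝ f.1 f.2 ⊆
        (({e.1, e.2} : Set Pt) ∩ {f.1, f.2}) := by
    intro e he f hf z hz
    exfalso
    have hz0 : xprod (b - a) (z - a) = 0 := by
      have hge : 0 ≤ xprod (b - a) (z - a) :=
        seg_nonneg (upProp e.1 (mem_of_mem_edgeList he).1).1
          (upProp e.2 (mem_of_mem_edgeList he).2).1 hz.1
      have hle : xprod (b - a) (z - a) ≤ 0 :=
        seg_nonpos (dnProp f.1 (mem_of_mem_edgeList hf).1).1
          (dnProp f.2 (mem_of_mem_edgeList hf).2).1 hz.2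
      linarith
    have hA := (upLine e he z hz.1 hz0).1
    have hB := (dnLine f hf z hz.2 hz0).1
    exact hab (hA.symm.trans hB)
  have upab : ∀ e ∈ edgeList Pup,
      segment ℝ e.1 e.2 ∩ segment ℝ a b ⊆
        (({e.1, e.2} : Set Pt) ∩ {a, b}) := by
    intro e he z hz
    have hz0 : xprod (b - a) (z - a) = 0 := seg_zero hga hgb hz.2
    have h := upLine e he z hz.1 hz0
    constructor
    · rcases h.2 with h' | h' <;> [exact Or.inl h'; exact Or.inr h']
    · exact Or.inl h.1
  have dnab : ∀ f ∈ edgeList L,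
      segment ℝ f.1 f.2 ∩ segment ℝ a b ⊆
        (({f.1, f.2} : Set Pt) ∩ {a, b}) := by
    intro f hf z hz
    have hz0 : xprod (b - a) (z - a) = 0 := seg_zero hga hgb hz.2
    have h := dnLine f hf z hz.1 hz0
    constructor
    · rcases h.2 with h' | h' <;> [exact Or.inl h'; exact Or.inr h']
    · exact Or.inr h.1
  -- the full list
  have hEL : edgeList (Pup ++ L) = edgeList Pup ++ (a, b) :: edgeList L :=
    edgeList_append Pup L a b hPlast hLhead
  have hdisj : ∀ x ∈ Pup, x ∉ L := by
    intro x hx hx'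
    have h1 : x ∈ insert a U := hPfin ▸ List.mem_toFinset.2 hx
    have h2 : x ∈ insert b D := hLfin ▸ List.mem_toFinset.2 hx'
    rcases Finset.mem_insert.1 h1 with rfl | h1'
    · rcases Finset.mem_insert.1 h2 with h | h2'
      · exact hab h
      · have := (Finset.mem_filter.1 h2').2
        rw [det3_self_mid] at this
        exact lt_irrefl 0 this
    · have hpos := (Finset.mem_filter.1 h1').2
      rcases Finset.mem_insert.1 h2 with rfl | h2'
      · rw [det3_self_right] at hpos
        exact lt_irrefl 0 hpos
      · have := (Finset.mem_filter.1 h2').2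
        linarith
  refine ⟨Pup ++ L, ⟨?_, ?_, ?_⟩, ?_, ?_, ?_⟩
  · exact List.Nodup.append hPnd hLnd hdisj
  · -- toFinset = S
    rw [List.toFinset_append, hPfin, hLfin]
    apply Finset.Subset.antisymm
    · intro x hx
      rcases Finset.mem_union.1 hx with h | h
      · exact hUsub h
      · exact hDsub h
    · intro x hx
      rcases lt_trichotomy (det3 a b x) 0 with h | h | h
      · exact Finset.mem_union_right _
          (Finset.mem_insert_of_mem (Finset.mem_filter.2 ⟨hx, h⟩))
      · -- det = 0 : x = a or x = b
        by_cases hxa : x = a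
        · exact Finset.mem_union_left _ (hxa ▸ Finset.mem_insert_self a U)
        by_cases hxb : x = b
        · exact Finset.mem_union_right _ (hxb ▸ Finset.mem_insert_self b D)
        · exfalso
          rw [det3_eq_xprod] at h
          exact hgp a ha b hb x hx hab (Ne.symm hxa) (Ne.symm hxb)
            (collinear_of_xprod_eq_zero h)
      · exact Finset.mem_union_left _
          (Finset.mem_insert_of_mem (Finset.mem_filter.2 ⟨hx, h⟩))
  · -- NC
    intro e he f hf hef
    rw [hEL] at he hf
    rw [List.mem_append, List.mem_cons] at he hf
    have symmsub : ∀ {e f : Pt × Pt},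
        (segment ℝ e.1 e.2 ∩ segment ℝ f.1 f.2 ⊆
          (({e.1, e.2} : Set Pt) ∩ {f.1, f.2})) →
        segment ℝ f.1 f.2 ∩ segment ℝ e.1 e.2 ⊆
          (({f.1, f.2} : Set Pt) ∩ {e.1, e.2}) := by
      intro e f h z hz
      exact ⟨(h ⟨hz.2, hz.1⟩).2, (h ⟨hz.2, hz.1⟩).1⟩
    rcases he with he | he
    · rcases hf with hf | hf
      · exact hPNC e he f hf hef
      · rcases hf with rfl | hf
        · exact upab e he
        · exact updown e he f hf
    · rcases he with rfl | he
      · rcases hf with hf | hf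
        · exact symmsub (upab f hf)
        · rcases hf with rfl | hf
          · exact absurd rfl hef
          · exact symmsub (dnab f hf)
      · rcases hf with hf | hf
        · exact symmsub (updown f hf e he)
        · rcases hf with rfl | hf
          · exact dnab e he
          · exact hLNC e he f hf hef
  · rw [head?_append_left hPne, hPhead]
  · rw [getLast?_append_right hLne, hLlast]
  · exact Or.inl (by rw [hEL]; exact List.mem_append_right _ (List.mem_cons_self))
end
end
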